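/- Consider the Rychkov system ẋ = y − (x⁵ − x³ + δx), ẏ = −x with δ = 0.236252, and the polynomial B₄(x,y) = y⁴ + 2x²y² + (4/105)x³(15x⁴ − 21x² + 35δ)y + (1/30)x⁴(10x⁸ − 24x⁶ + 30δx⁴ + 15x⁴ − 40δx² + 30δ² + 30). Then the derivative of B₄ along the flow equals x⁴ R₁₂(x, δ), where R₁₂ is the explicit even degree-12 polynomial −(4/105)(105x¹² − 315x¹⁰ + (315δ+315)x⁸ − (630δ+105)x⁶ + (315δ²+315δ+120)x⁴ − (315δ²+126)x² + 35δ(3δ²+4)). -/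

import Mathlib

theorem stmt_17 (B : ℝ → ℝ → ℝ → ℝ)
    (hB : ∀ δ x y : ℝ, B δ x y =
      y ^ 4 + 2 * x ^ 2 * y ^ 2 +
        (4 / 105) * x ^ 3 * (15 * x ^ 4 - 21 * x ^ 2 + 35 * δ) * y +
        (1 / 30) * x ^ 4 * (10 * x ^ 8 - 24 * x ^ 6 + 30 * δ * x ^ 4 + 15 * x ^ 4 -
          40 * δ * x ^ 2 + 30 * δ ^ 2 + 30))
    (R : ℝ → ℝ → ℝ)
    (hR : ∀ δ x : ℝ, R δ x =
      -(4 / 105) * (105 * x ^ 12 - 315 * x ^ 10 + (315 * δ + 315) * x ^ 8 -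
        (630 * δ + 105) * x ^ 6 + (315 * δ ^ 2 + 315 * δ + 120) * x ^ 4 -
        (315 * δ ^ 2 + 126) * x ^ 2 + 35 * δ * (3 * δ ^ 2 + 4))) :
    ∀ δ x y : ℝ,
      deriv (fun x' => B δ x' y) x * (y - (x ^ 5 - x ^ 3 + δ * x)) +
        deriv (fun y' => B δ x y') y * (-x) = x ^ 4 * R δ x := by
  intro δ x y
  have Hx : HasDerivAt (fun x' : ℝ =>
      y ^ 4 + 2 * x' ^ 2 * y ^ 2 +
        (4 / 105) * x' ^ 3 * (15 * x' ^ 4 - 21 * x' ^ 2 + 35 * δ) * y +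
        (1 / 30) * x' ^ 4 * (10 * x' ^ 8 - 24 * x' ^ 6 + 30 * δ * x' ^ 4 + 15 * x' ^ 4 -
          40 * δ * x' ^ 2 + 30 * δ ^ 2 + 30)) _ x :=
    ((((hasDerivAt_const x (y ^ 4)).add
        (((hasDerivAt_pow 2 x).const_mul 2).mul_const (y ^ 2))).add
        ((((hasDerivAt_pow 3 x).const_mul (4 / 105)).mul
          ((((hasDerivAt_pow 4 x).const_mul 15).sub
            ((hasDerivAt_pow 2 x).const_mul 21)).add_const (35 * δ))).mul_const y)).add
        (((hasDerivAt_pow 4 x).const_mul (1 / 30)).mul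
          ((((((((hasDerivAt_pow 8 x).const_mul 10).sub
            ((hasDerivAt_pow 6 x).const_mul 24)).add
            ((hasDerivAt_pow 4 x).const_mul (30 * δ))).add
            ((hasDerivAt_pow 4 x).const_mul 15)).sub
            ((hasDerivAt_pow 2 x).const_mul (40 * δ))).add_const (30 * δ ^ 2)).add_const 30)))
  have Hy : HasDerivAt (fun y' : ℝ =>
      y' ^ 4 + 2 * x ^ 2 * y' ^ 2 +
        (4 / 105) * x ^ 3 * (15 * x ^ 4 - 21 * x ^ 2 + 35 * δ) * y' +
        (1 / 30) * x ^ 4 * (10 * x ^ 8 - 24 * x ^ 6 + 30 * δ * x ^ 4 + 15 * x ^ 4 -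
          40 * δ * x ^ 2 + 30 * δ ^ 2 + 30)) _ y :=
    (((hasDerivAt_pow 4 y).add
        ((hasDerivAt_pow 2 y).const_mul (2 * x ^ 2))).add
        ((hasDerivAt_id y).const_mul ((4 / 105) * x ^ 3 * (15 * x ^ 4 - 21 * x ^ 2 + 35 * δ)))).add_const
      ((1 / 30) * x ^ 4 * (10 * x ^ 8 - 24 * x ^ 6 + 30 * δ * x ^ 4 + 15 * x ^ 4 -
          40 * δ * x ^ 2 + 30 * δ ^ 2 + 30))
  simp only [hB, hR]
  rw [Hx.deriv, Hy.deriv]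
  push_cast [Pi.sub_apply]
  ring
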